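/- Let r ≥ 1 and let c_0,...,c_r : ℤ → ℂ satisfy c_k(n) = 0 whenever (r+1) ∤ (n+k). Then the space of solutions x : ℤ → ℂ of Σ_{k=0}^r c_k(n) x(n+k) = 0 (for all n ∈ ℤ) is infinite-dimensional as a ℂ-vector space. -/

import Mathlib

/-- `x` is a solution of the linear difference equation with coefficients `a 0, ..., a r`. -/
def IsSol (r : ℕ) (a : ℕ → ℤ → ℂ) (x : ℤ → ℂ) : Prop :=
  ∀ n : ℤ, ∑ k ∈ Finset.range (r + 1), a k n * x (n + k) = 0

/-- The space of solutions of the linear difference equation. -/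
noncomputable def solSpace (r : ℕ) (a : ℕ → ℤ → ℂ) : Submodule ℂ (ℤ → ℂ) where
  carrier := {x | IsSol r a x}
  add_mem' := by
    intro x y hx hy n
    simp only [Pi.add_apply, mul_add, Finset.sum_add_distrib, hx n, hy n, add_zero]
  zero_mem' := by intro n; simp
  smul_mem' := by
    intro c x hx n
    simp only [Pi.smul_apply, smul_eq_mul, mul_left_comm, ← Finset.mul_sum, hx n, mul_zero]

/-- Sequences vanishing on a set `s`. -/
noncomputable def vanishOn (s : Set ℤ) : Submodule ℂ (ℤ → ℂ) where
  carrier := {x | ∀ n ∈ s, x n = 0}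
  add_mem' := by intro x y hx hy n hn; simp [hx n hn, hy n hn]
  zero_mem' := by intro n _; simp
  smul_mem' := by intro c x hx n hn; simp [hx n hn]

/-- A sequence is lacunary if the gaps between consecutive support elements are unbounded. -/
def Lacunary (x : ℤ → ℂ) : Prop :=
  ∀ L : ℤ, ∃ i j : ℤ, x i ≠ 0 ∧ x j ≠ 0 ∧ i < j ∧ L < j - i ∧
    ∀ k : ℤ, i < k → k < j → x k = 0

theorem example_infinite_dimensional (r : ℕ) (hr : 1 ≤ r) (c : ℕ → ℤ → ℂ)
    (hc : ∀ k ≤ r, ∀ n : ℤ, ¬ ((r : ℤ) + 1 ∣ n + k) → c k n = 0) :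
    ¬ FiniteDimensional ℂ (solSpace r c) := by
  intro hfin
  set d : ℤ := (r : ℤ) + 1 with hd
  have hd2 : 2 ≤ d := by omega
  haveI : Infinite {m : ℤ // ¬ (d ∣ m)} := by
    refine Infinite.of_injective (fun k : ℤ => (⟨d * k + 1, ?_⟩ : {m : ℤ // ¬ (d ∣ m)})) ?_
    · intro h
      have h1 : d ∣ 1 := (dvd_add_right (Dvd.intro k rfl)).mp h
      have := Int.le_of_dvd one_pos h1
      omega
    · intro a b hab
      have h2 : d * a + 1 = d * b + 1 := congrArg Subtype.val hab
      have hd0 : d ≠ 0 := by omega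
      exact mul_left_cancel₀ hd0 (by omega)
  have hmem : ∀ g : {m : ℤ // ¬ (d ∣ m)} →₀ ℂ,
      (fun m : ℤ => if h : d ∣ m then 0 else g ⟨m, h⟩) ∈ solSpace r c := by
    intro g n
    apply Finset.sum_eq_zero
    intro k hk
    by_cases hdvd : d ∣ (n + k)
    · simp [hdvd]
    · rw [hc k (by simpa using Finset.mem_range_succ_iff.mp hk) n hdvd, zero_mul]
  let f : ({m : ℤ // ¬ (d ∣ m)} →₀ ℂ) →ₗ[ℂ] solSpace r c :=
    { toFun := fun g => ⟨fun m => if h : d ∣ m then 0 else g ⟨m, h⟩, hmem g⟩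
      map_add' := by
        intro g h
        apply Subtype.ext
        funext m
        by_cases hm : d ∣ m <;> simp [hm]
      map_smul' := by
        intro cc g
        apply Subtype.ext
        funext m
        by_cases hm : d ∣ m <;> simp [hm] }
    
  have hinj : Function.Injective f := by
    intro g h hgh
    ext t
    have h2 := congrFun (congrArg Subtype.val hgh) t.val
    simpa [f, t.prop] using h2
  haveI : FiniteDimensional ℂ ({m : ℤ // ¬ (d ∣ m)} →₀ ℂ) :=
    FiniteDimensional.of_injective f hinj
  haveI := FiniteDimensional.fintypeBasisIndex
    (Finsupp.basisSingleOne : Module.Basis {m : ℤ // ¬ (d ∣ m)} ℂ _)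
  exact absurd (Finite.of_fintype {m : ℤ // ¬ (d ∣ m)}) (Infinite.not_finite)
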